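/- With the labeling λ of Π_{n,s+1}: if x ⋖ y is an edge with A(x) ≠ A(y) and λ(x ⋖ y) = (k,i,j), then the underlying partition of y is obtained from that of x by merging the part containing k with the part whose i-th label contains j. -/

import Mathlib

open Finset

/-- A vector partition of `[n]` into `s+1` components: a partition `P` of `[n]`
together with `s` labelings of its parts. -/
structure VPart (n s : ℕ) where
  P : Finpartition (Finset.univ : Finset (Fin n))
  w : Fin s → Finset (Fin n) → Finset (Fin n)
  card_w : ∀ i : Fin s, ∀ B ∈ P.parts, (w i B).card = B.card
  part_w : ∀ i : Fin s, ∀ x : Fin n, ∃! B, B ∈ P.parts ∧ x ∈ w i B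
  w_junk : ∀ i B, B ∉ P.parts → w i B = ∅

namespace VPart

variable {n s : ℕ}

@[ext] theorem ext' {x y : VPart n s} (hP : x.P = y.P) (hw : x.w = y.w) : x = y := by
  cases x; cases y; simp_all

/-- componentwise union-refinement order -/
instance : PartialOrder (VPart n s) where
  le x y := x.P ≤ y.P ∧
    ∀ i : Fin s, ∀ B ∈ x.P.parts, ∀ B' ∈ y.P.parts, B ⊆ B' → x.w i B ⊆ y.w i B'
  le_refl x := by
    refine ⟨le_refl _, fun i B hB B' hB' hBB' => ?_⟩
    obtain rfl : B = B' := by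
      obtain ⟨a, ha⟩ := x.P.nonempty_of_mem_parts hB
      exact x.P.eq_of_mem_parts hB hB' ha (hBB' ha)
    exact subset_rfl
  le_trans x y z hxy hyz := by
    refine ⟨le_trans hxy.1 hyz.1, fun i B hB B'' hB'' hBB'' => ?_⟩
    obtain ⟨B', hB', hBB'⟩ := hxy.1 hB
    obtain ⟨B''', hB''', hB'B'''⟩ := hyz.1 hB'
    obtain ⟨a, ha⟩ := x.P.nonempty_of_mem_parts hB
    obtain rfl : B''' = B'' :=
      z.P.eq_of_mem_parts hB''' hB'' (hB'B''' (hBB' ha)) (hBB'' ha)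
    exact subset_trans (hxy.2 i B hB B' hB' hBB') (hyz.2 i B' hB' B''' hB''' hB'B''')
  le_antisymm x y hxy hyx := by
    have hP : x.P = y.P := le_antisymm hxy.1 hyx.1
    refine ext' hP ?_
    funext i B
    by_cases hB : B ∈ x.P.parts
    · exact subset_antisymm (hxy.2 i B hB B (hP ▸ hB) subset_rfl)
        (hyx.2 i B (hP ▸ hB) B hB subset_rfl)
    · rw [x.w_junk i B hB, y.w_junk i B (hP ▸ hB)]

/-- the part of the underlying partition containing `k` -/
def partOf (x : VPart n s) (k : Fin n) : Finset (Fin n) := x.P.part k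

/-- the atom word of `x`: `atomWord x i k` is the element of the `i`-th label of the
part containing `k` whose rank in that label matches the rank of `k` in its part. -/
def atomWord (x : VPart n s) (i : Fin s) (k : Fin n) : Fin n :=
  (((x.w i (x.partOf k)).sort (· ≤ ·)).getD (((x.partOf k).filter (· < k)).card)) k

/-- `x` is an atom: all parts of the underlying partition are singletons. -/
def IsAtomic (x : VPart n s) : Prop := ∀ B ∈ x.P.parts, B.card = 1

/-- strict lexicographic order on atom words, with `i` as the major index
and `k` the minor index. -/
def wordLt (A B : Fin s → Fin n → Fin n) : Prop :=
  ∃ i k, A i k < B i k ∧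
    ∀ i' k', (i' < i ∨ (i' = i ∧ k' < k)) → A i' k' = B i' k'

def wordLe (A B : Fin s → Fin n → Fin n) : Prop := wordLt A B ∨ A = B

end VPart




namespace VPartAux

variable {α : Type*} [LinearOrder α] {T B : Finset α} {t t' : α}

/-- rank of `t` in `T` -/
def rk (T : Finset α) (t : α) : ℕ := (T.filter (· < t)).card

lemma rk_lt_card (ht : t ∈ T) : rk T t < T.card := by
  apply Finset.card_lt_card
  refine ⟨Finset.filter_subset _ _, fun hsub => ?_⟩
  simpa using (Finset.mem_filter.1 (hsub ht)).2

lemma rk_lt_rk (ht : t ∈ T) (h : t < t') : rk T t < rk T t' := by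
  apply Finset.card_lt_card
  constructor
  · intro a ha
    rw [Finset.mem_filter] at ha ⊢
    exact ⟨ha.1, lt_trans ha.2 h⟩
  · intro hsub
    have : t ∈ T.filter (· < t') := Finset.mem_filter.2 ⟨ht, h⟩
    simpa using (Finset.mem_filter.1 (hsub this)).2

lemma rk_lt_iff (ht : t ∈ T) (ht' : t' ∈ T) : rk T t < rk T t' ↔ t < t' := by
  constructor
  · intro h
    by_contra hn
    push_neg at hn
    rcases eq_or_lt_of_le hn with rfl | hlt
    · exact lt_irrefl _ h
    · have := rk_lt_rk ht' hlt
      omega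
  · exact fun h => rk_lt_rk ht h

lemma rk_injOn (ht : t ∈ T) (ht' : t' ∈ T) (h : rk T t = rk T t') : t = t' := by
  rcases lt_trichotomy t t' with hlt | heq | hlt
  · have := rk_lt_rk ht hlt; omega
  · exact heq
  · have := rk_lt_rk ht' hlt; omega

lemma rk_sort_getElem (T : Finset α) (r : ℕ) (hr : r < (T.sort (· ≤ ·)).length) :
    rk T ((T.sort (· ≤ ·))[r]) = r := by
  set l := T.sort (· ≤ ·) with hl
  have hnd : l.Nodup := T.sort_nodup _
  have hmono : StrictMono l.get := (T.sortedLT_sort).strictMono_get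
  have hset : T.filter (· < l[r]) = (l.take r).toFinset := by
    ext a
    simp only [Finset.mem_filter, List.mem_toFinset]
    constructor
    · rintro ⟨haT, halt⟩
      have : a ∈ l := (Finset.mem_sort _).2 haT
      obtain ⟨s, hs, rfl⟩ := List.mem_iff_getElem.1 this
      have hsr : s < r := by
        by_contra hc
        push_neg at hc
        have : l[r] ≤ l[s] := by
          rcases eq_or_lt_of_le hc with rfl | hlt
          · exact le_refl _
          · exact le_of_lt (hmono (show (⟨r, hr⟩ : Fin l.length) < ⟨s, hs⟩ from hlt))
        exact absurd halt (not_lt.2 this)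
      rw [List.mem_take_iff_getElem]
      exact ⟨s, by omega, rfl⟩
    · intro ha
      rw [List.mem_take_iff_getElem] at ha
      obtain ⟨s, hs, rfl⟩ := ha
      have hs' : s < l.length := lt_of_lt_of_le hs (min_le_right _ _)
      refine ⟨(Finset.mem_sort (α := α) (· ≤ ·)).1 (List.getElem_mem _), ?_⟩
      · exact hmono (show (⟨s, hs'⟩ : Fin l.length) < ⟨r, hr⟩ from by
          simp only [Fin.mk_lt_mk]; omega)
  rw [rk, hset, List.toFinset_card_of_nodup (hnd.sublist (List.take_sublist _ _)),
    List.length_take]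
  omega

lemma rk_sort_mem (T : Finset α) (r : ℕ) (hr : r < (T.sort (· ≤ ·)).length) :
    (T.sort (· ≤ ·))[r] ∈ T :=
  (Finset.mem_sort _).1 (List.getElem_mem _)

lemma getD_spec (T : Finset α) {r : ℕ} (hr : r < T.card) (d : α) :
    (T.sort (· ≤ ·)).getD r d ∈ T ∧ rk T ((T.sort (· ≤ ·)).getD r d) = r := by
  have hlen : r < (T.sort (· ≤ ·)).length := by rwa [Finset.length_sort]
  rw [List.getD_eq_getElem _ _ hlen]
  exact ⟨rk_sort_mem T r hlen, rk_sort_getElem T r hlen⟩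

lemma getD_rk (ht : t ∈ T) (d : α) : (T.sort (· ≤ ·)).getD (rk T t) d = t := by
  obtain ⟨hmem, hrk⟩ := getD_spec T (rk_lt_card ht) d
  exact rk_injOn hmem ht hrk

lemma filter_lt_eq_image [DecidableEq α] (B T : Finset α) (hcard : T.card = B.card) (d : α) {b : α}
    (hb : b ∈ B) :
    T.filter (· < (T.sort (· ≤ ·)).getD (rk B b) d) =
      (B.filter (· < b)).image (fun a => (T.sort (· ≤ ·)).getD (rk B a) d) := by
  set φ : α → α := fun a => (T.sort (· ≤ ·)).getD (rk B a) d with hφ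
  have hspec : ∀ a ∈ B, φ a ∈ T ∧ rk T (φ a) = rk B a := fun a ha =>
    getD_spec T (hcard ▸ rk_lt_card ha) d
  ext t
  simp only [Finset.mem_filter, Finset.mem_image]
  constructor
  · rintro ⟨htT, hlt⟩
    have hrkb : rk T (φ b) = rk B b := (hspec b hb).2
    have hr : rk T t < rk B b := by
      rw [← hrkb]; exact rk_lt_rk htT hlt
    have hrB : rk T t < (B.sort (· ≤ ·)).length := by
      rw [Finset.length_sort]
      exact lt_of_lt_of_le hr (le_of_lt (rk_lt_card hb))
    set a := (B.sort (· ≤ ·))[rk T t] with ha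
    have haB : a ∈ B := rk_sort_mem B _ hrB
    have hark : rk B a = rk T t := rk_sort_getElem B _ hrB
    refine ⟨a, ⟨haB, ?_⟩, ?_⟩
    · rw [← rk_lt_iff haB hb, hark]; exact hr
    · have := (hspec a haB).2
      exact rk_injOn (hspec a haB).1 htT (by rw [this, hark])
  · rintro ⟨a, ⟨haB, hab⟩, rfl⟩
    refine ⟨(hspec a haB).1, ?_⟩
    rw [← rk_lt_iff (hspec a haB).1 (hspec b hb).1, (hspec a haB).2, (hspec b hb).2]
    exact rk_lt_rk haB hab

end VPartAux

namespace VPart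

open VPartAux

variable {n s : ℕ}

lemma le_def {x y : VPart n s} : x ≤ y ↔ x.P ≤ y.P ∧
    ∀ i : Fin s, ∀ B ∈ x.P.parts, ∀ B' ∈ y.P.parts, B ⊆ B' → x.w i B ⊆ y.w i B' :=
  Iff.rfl

lemma w_disjoint (x : VPart n s) (i : Fin s) {B B' : Finset (Fin n)} (hB : B ∈ x.P.parts)
    (hB' : B' ∈ x.P.parts) (hne : B ≠ B') : Disjoint (x.w i B) (x.w i B') := by
  rw [Finset.disjoint_left]
  intro a haB haB'
  obtain ⟨D, hD, huniq⟩ := x.part_w i a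
  exact hne ((huniq B ⟨hB, haB⟩).trans (huniq B' ⟨hB', haB'⟩).symm)

lemma subset_of_mem {x : VPart n s} {Q : Finpartition (Finset.univ : Finset (Fin n))}
    (hP : x.P ≤ Q) {B C : Finset (Fin n)}
    (hB : B ∈ x.P.parts) (hC : C ∈ Q.parts) {b : Fin n} (hbB : b ∈ B) (hbC : b ∈ C) :
    B ⊆ C := by
  obtain ⟨C', hC', hsub⟩ := hP hB
  rwa [Q.eq_of_mem_parts hC' hC (hsub hbB) hbC] at hsub

lemma biUnion_filter_parts {x : VPart n s} {Q : Finpartition (Finset.univ : Finset (Fin n))}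
    (hP : x.P ≤ Q) {C : Finset (Fin n)} (hC : C ∈ Q.parts) :
    (x.P.parts.filter (· ⊆ C)).biUnion id = C := by
  apply Finset.Subset.antisymm
  · intro a ha
    obtain ⟨B, hB, haB⟩ := Finset.mem_biUnion.1 ha
    exact (Finset.mem_filter.1 hB).2 haB
  · intro c hc
    have hcu : c ∈ (Finset.univ : Finset (Fin n)) := Finset.mem_univ c
    refine Finset.mem_biUnion.2 ⟨x.P.part c,
      Finset.mem_filter.2 ⟨x.P.part_mem.2 hcu, ?_⟩, x.P.mem_part hcu⟩
    exact subset_of_mem hP (x.P.part_mem.2 hcu) hC (x.P.mem_part hcu) hc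

lemma card_biUnion_w {x : VPart n s} {Q : Finpartition (Finset.univ : Finset (Fin n))}
    (hP : x.P ≤ Q) (i : Fin s) {C : Finset (Fin n)} (hC : C ∈ Q.parts) :
    ((x.P.parts.filter (· ⊆ C)).biUnion (x.w i)).card = C.card := by
  calc ((x.P.parts.filter (· ⊆ C)).biUnion (x.w i)).card
      = ∑ B ∈ x.P.parts.filter (· ⊆ C), (x.w i B).card :=
        Finset.card_biUnion (fun B hB B' hB' hne =>
          w_disjoint x i (Finset.mem_filter.1 hB).1 (Finset.mem_filter.1 hB').1 hne)
    _ = ∑ B ∈ x.P.parts.filter (· ⊆ C), (id B).card :=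
        Finset.sum_congr rfl (fun B hB => x.card_w i B (Finset.mem_filter.1 hB).1)
    _ = ((x.P.parts.filter (· ⊆ C)).biUnion id).card :=
        (Finset.card_biUnion (fun B hB B' hB' hne =>
          x.P.disjoint (Finset.mem_filter.1 hB).1 (Finset.mem_filter.1 hB').1 hne)).symm
    _ = C.card := by rw [biUnion_filter_parts hP hC]

lemma w_forced {x y : VPart n s} (hle : x ≤ y) (i : Fin s) {C : Finset (Fin n)}
    (hC : C ∈ y.P.parts) :
    y.w i C = (x.P.parts.filter (· ⊆ C)).biUnion (x.w i) := by
  have hsub : (x.P.parts.filter (· ⊆ C)).biUnion (x.w i) ⊆ y.w i C := by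
    intro a ha
    obtain ⟨B, hB, haB⟩ := Finset.mem_biUnion.1 ha
    obtain ⟨hBp, hBC⟩ := Finset.mem_filter.1 hB
    exact hle.2 i B hBp C hC hBC haB
  refine (Finset.eq_of_subset_of_card_le hsub ?_).symm
  rw [card_biUnion_w hle.1 i hC, y.card_w i C hC]

lemma filter_subset_self_parts {x : VPart n s} {B : Finset (Fin n)} (hB : B ∈ x.P.parts) :
    x.P.parts.filter (· ⊆ B) = {B} := by
  ext B'
  simp only [Finset.mem_filter, Finset.mem_singleton]
  constructor
  · rintro ⟨hB', hsub⟩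
    obtain ⟨b, hb⟩ := x.P.nonempty_of_mem_parts hB'
    exact x.P.eq_of_mem_parts hB' hB hb (hsub hb)
  · rintro rfl
    exact ⟨hB, Finset.Subset.refl _⟩

lemma P_ne_of_lt {x y : VPart n s} (h : x < y) : x.P ≠ y.P := by
  intro hP
  apply h.ne
  apply ext' hP
  funext i B
  by_cases hB : B ∈ x.P.parts
  · have hBy : B ∈ y.P.parts := hP ▸ hB
    rw [w_forced h.le i hBy, filter_subset_self_parts hB, Finset.singleton_biUnion]
  · rw [x.w_junk i B hB, y.w_junk i B (hP ▸ hB)]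

/-- lift a coarser partition to a vector partition above `x` -/
def lift (x : VPart n s) (Q : Finpartition (Finset.univ : Finset (Fin n)))
    (hQ : x.P ≤ Q) : VPart n s where
  P := Q
  w i D := if D ∈ Q.parts then (x.P.parts.filter (· ⊆ D)).biUnion (x.w i) else ∅
  card_w i D hD := by
    rw [if_pos hD, card_biUnion_w hQ i hD]
  part_w i a := by
    obtain ⟨B, ⟨hB, haB⟩, huniq⟩ := x.part_w i a
    obtain ⟨D, hD, hBD⟩ := hQ hB
    refine ⟨D, ⟨hD, ?_⟩, ?_⟩
    · rw [if_pos hD]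
      exact Finset.mem_biUnion.2 ⟨B, Finset.mem_filter.2 ⟨hB, hBD⟩, haB⟩
    · rintro D' ⟨hD', haD'⟩
      rw [if_pos hD'] at haD'
      obtain ⟨B', hB', haB'⟩ := Finset.mem_biUnion.1 haD'
      obtain ⟨hB'p, hB'D'⟩ := Finset.mem_filter.1 hB'
      have hBB : B' = B := huniq B' ⟨hB'p, haB'⟩
      subst hBB
      obtain ⟨b, hb⟩ := x.P.nonempty_of_mem_parts hB'p
      exact Q.eq_of_mem_parts hD' hD (hB'D' hb) (hBD hb)
  w_junk i D hD := if_neg hD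

lemma le_lift (x : VPart n s) (Q : Finpartition (Finset.univ : Finset (Fin n)))
    (hQ : x.P ≤ Q) : x ≤ lift x Q hQ := by
  refine ⟨hQ, fun i B hB D hD hBD => ?_⟩
  show x.w i B ⊆ if D ∈ Q.parts then _ else _
  rw [if_pos (show D ∈ Q.parts from hD)]
  intro a ha
  exact Finset.mem_biUnion.2 ⟨B, Finset.mem_filter.2 ⟨hB, hBD⟩, ha⟩

lemma lift_le {x y : VPart n s} (hle : x ≤ y)
    (Q : Finpartition (Finset.univ : Finset (Fin n))) (hQ : x.P ≤ Q) (hQy : Q ≤ y.P) :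
    lift x Q hQ ≤ y := by
  refine ⟨hQy, fun i D hD C hC hDC => ?_⟩
  show (if D ∈ Q.parts then _ else _) ⊆ y.w i C
  rw [if_pos (show D ∈ Q.parts from hD)]
  intro a ha
  obtain ⟨B, hB, haB⟩ := Finset.mem_biUnion.1 ha
  obtain ⟨hBp, hBD⟩ := Finset.mem_filter.1 hB
  exact hle.2 i B hBp C hC (hBD.trans hDC) haB

lemma split_exists (P : Finpartition (Finset.univ : Finset (Fin n))) {C B₁ : Finset (Fin n)}
    (hC : C ∈ P.parts) (hB₁C : B₁ ⊆ C) (h1 : B₁.Nonempty) (h2 : B₁ ≠ C) :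
    ∃ Q : Finpartition (Finset.univ : Finset (Fin n)),
      Q.parts = insert B₁ (insert (C \ B₁) (P.parts.erase C)) := by
  have h2' : (C \ B₁).Nonempty := by
    obtain ⟨c, hcC, hcB⟩ := Finset.exists_of_ssubset (ssubset_of_subset_of_ne hB₁C h2)
    exact ⟨c, Finset.mem_sdiff.2 ⟨hcC, hcB⟩⟩
  have hdis : ∀ D ∈ P.parts, D ≠ C → Disjoint C D := fun D hD hDC =>
    P.disjoint hC hD (Ne.symm hDC)
  refine ⟨⟨insert B₁ (insert (C \ B₁) (P.parts.erase C)), ?_, ?_, ?_⟩, rfl⟩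
  · rw [Finset.supIndep_iff_pairwiseDisjoint]
    intro a ha b hb hab
    simp only [Finset.coe_insert, Set.mem_insert_iff, Finset.mem_coe,
      Finset.mem_erase] at ha hb
    have key : ∀ D, D ∈ P.parts → D ≠ C → Disjoint B₁ D ∧ Disjoint (C \ B₁) D :=
      fun D hD hDC => ⟨Finset.disjoint_of_subset_left hB₁C (hdis D hD hDC),
        Finset.disjoint_of_subset_left (Finset.sdiff_subset) (hdis D hD hDC)⟩
    show Disjoint (id a) (id b)
    simp only [id]
    rcases ha with rfl | rfl | ⟨haC, haP⟩ <;> rcases hb with rfl | rfl | ⟨hbC, hbP⟩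
    · exact absurd rfl hab
    · exact Finset.disjoint_sdiff
    · exact (key b hbP hbC).1
    · exact Finset.disjoint_sdiff.symm
    · exact absurd rfl hab
    · exact (key b hbP hbC).2
    · exact ((key a haP haC).1).symm
    · exact ((key a haP haC).2).symm
    · exact P.disjoint haP hbP hab
  · rw [Finset.sup_insert, Finset.sup_insert]
    have : (id B₁ : Finset (Fin n)) ⊔ (id (C \ B₁) ⊔ (P.parts.erase C).sup id)
        = (id C) ⊔ (P.parts.erase C).sup id := by
      rw [← sup_assoc]
      congr 1
      show B₁ ⊔ (C \ B₁) = C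
      rw [Finset.sup_eq_union, Finset.union_sdiff_of_subset hB₁C]
    rw [this, ← Finset.sup_insert, Finset.insert_erase hC, P.sup_parts]
  · intro hbot
    simp only [Finset.bot_eq_empty, Finset.mem_insert, Finset.mem_erase] at hbot
    rcases hbot with h | h | ⟨-, h⟩
    · exact h1.ne_empty h.symm
    · exact h2'.ne_empty h.symm
    · exact P.bot_notMem (by rw [Finset.bot_eq_empty]; exact h)

lemma finpartition_eq {a : Finset (Fin n)} {P Q : Finpartition a} (h : P.parts = Q.parts) :
    P = Q := by
  cases P; cases Q
  simp only at h
  subst h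
  rfl

lemma cover_structure {x y : VPart n s} (hxy : x ⋖ y) :
    ∃ B₁ B₂ : Finset (Fin n), B₁ ∈ x.P.parts ∧ B₂ ∈ x.P.parts ∧ B₁ ≠ B₂ ∧
      y.P.parts = insert (B₁ ∪ B₂) ((x.P.parts.erase B₁).erase B₂) := by
  have hlt : x < y := hxy.1
  have hle : x ≤ y := hlt.le
  have hPne : x.P ≠ y.P := P_ne_of_lt hlt
  -- there is a part of y that is not a part of x
  have hex : ∃ C ∈ y.P.parts, C ∉ x.P.parts := by
    by_contra hcon
    push_neg at hcon
    apply hPne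
    apply finpartition_eq
    apply Finset.Subset.antisymm
    · intro B hB
      obtain ⟨C, hCy, hBC⟩ := hle.1 hB
      have hCx : C ∈ x.P.parts := hcon C hCy
      obtain ⟨b, hb⟩ := x.P.nonempty_of_mem_parts hB
      rwa [x.P.eq_of_mem_parts hB hCx hb (hBC hb)]
    · exact fun C hC => hcon C hC
  obtain ⟨C, hCy, hCx⟩ := hex
  obtain ⟨c, hc⟩ := y.P.nonempty_of_mem_parts hCy
  set B₁ := x.P.part c with hB₁def
  have hB₁ : B₁ ∈ x.P.parts := x.P.part_mem.2 (Finset.mem_univ c)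
  have hcB₁ : c ∈ B₁ := x.P.mem_part (Finset.mem_univ c)
  have hB₁C : B₁ ⊆ C := subset_of_mem hle.1 hB₁ hCy hcB₁ hc
  have hB₁ne : B₁.Nonempty := ⟨c, hcB₁⟩
  have hB₁neC : B₁ ≠ C := fun h => hCx (h ▸ hB₁)
  obtain ⟨Q, hQparts⟩ := split_exists y.P hCy hB₁C hB₁ne hB₁neC
  -- x.P ≤ Q
  have hxQ : x.P ≤ Q := by
    intro B hB
    obtain ⟨C', hC', hBC'⟩ := hle.1 hB
    by_cases hCC : C' = C
    · subst hCC
      by_cases hBB : B = B₁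
      · exact ⟨B₁, by rw [hQparts]; exact Finset.mem_insert_self _ _, hBB ▸ le_refl _⟩
      · refine ⟨C' \ B₁, ?_, ?_⟩
        · rw [hQparts]
          exact Finset.mem_insert_of_mem (Finset.mem_insert_self _ _)
        · have hdisj : Disjoint B B₁ := x.P.disjoint hB hB₁ hBB
          exact Finset.subset_sdiff.2 ⟨hBC', hdisj⟩
    · refine ⟨C', ?_, hBC'⟩
      rw [hQparts]
      exact Finset.mem_insert_of_mem
        (Finset.mem_insert_of_mem (Finset.mem_erase.2 ⟨hCC, hC'⟩))
  -- Q ≤ y.P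
  have hQy : Q ≤ y.P := by
    intro D hD
    rw [hQparts] at hD
    rcases Finset.mem_insert.1 hD with rfl | hD
    · exact ⟨C, hCy, hB₁C⟩
    rcases Finset.mem_insert.1 hD with rfl | hD
    · exact ⟨C, hCy, Finset.sdiff_subset⟩
    · exact ⟨D, Finset.mem_of_mem_erase hD, le_refl _⟩
  -- C ∉ Q.parts
  have hCQ : C ∉ Q.parts := by
    rw [hQparts]
    simp only [Finset.mem_insert, Finset.mem_erase]
    rintro (h | h | ⟨h, -⟩)
    · exact hB₁neC h.symm
    · have : c ∈ C \ B₁ := h ▸ hc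
      exact (Finset.mem_sdiff.1 this).2 hcB₁
    · exact h rfl
  -- use the covering property
  have hz : x.P = Q := by
    by_contra hne
    have h1 : x < lift x Q hxQ := lt_of_le_of_ne (le_lift x Q hxQ)
      (fun h => hne (congrArg VPart.P h))
    have h2 : lift x Q hxQ < y := lt_of_le_of_ne (lift_le hle Q hxQ hQy)
      (fun h => hCQ (by rw [show Q = y.P from congrArg VPart.P h]; exact hCy))
    exact hxy.2 h1 h2
  have hQx : Q.parts = x.P.parts := by rw [← hz]
  set B₂ := C \ B₁ with hB₂def
  have hB₂ : B₂ ∈ x.P.parts := by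
    rw [← hQx, hQparts]
    exact Finset.mem_insert_of_mem (Finset.mem_insert_self _ _)
  have hB₁B₂ : B₁ ≠ B₂ := by
    intro h
    have : c ∈ B₂ := h ▸ hcB₁
    exact (Finset.mem_sdiff.1 this).2 hcB₁
  have hCun : C = B₁ ∪ B₂ := (Finset.union_sdiff_of_subset hB₁C).symm
  -- B₁ and B₂ are not in y.P.parts.erase C
  have hB₁ny : B₁ ∉ y.P.parts.erase C := by
    intro h
    obtain ⟨hne', hmem⟩ := Finset.mem_erase.1 h
    exact hne' (y.P.eq_of_mem_parts hmem hCy hcB₁ (hB₁C hcB₁))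
  have hB₂ny : B₂ ∉ y.P.parts.erase C := by
    intro h
    obtain ⟨hne', hmem⟩ := Finset.mem_erase.1 h
    obtain ⟨b, hbC, hbB⟩ := Finset.exists_of_ssubset (ssubset_of_subset_of_ne hB₁C hB₁neC)
    have hb : b ∈ B₂ := Finset.mem_sdiff.2 ⟨hbC, hbB⟩
    exact hne' (y.P.eq_of_mem_parts hmem hCy hb (Finset.sdiff_subset hb))
  -- compute the erases
  have herase : (x.P.parts.erase B₁).erase B₂ = y.P.parts.erase C := by
    rw [← hQx, hQparts]
    rw [Finset.erase_insert (by
      simp only [Finset.mem_insert]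
      rintro (h | h)
      · exact hB₁B₂ h
      · exact hB₁ny h)]
    rw [Finset.erase_insert hB₂ny]
  refine ⟨B₁, B₂, hB₁, hB₂, hB₁B₂, ?_⟩
  rw [← hCun, herase, Finset.insert_erase hCy]

lemma partOf_eq {x : VPart n s} {k : Fin n} {B : Finset (Fin n)} (hB : B ∈ x.P.parts)
    (hkB : k ∈ B) : x.partOf k = B := x.P.part_eq_of_mem hB hkB

lemma atomWord_eq_getD (x : VPart n s) (i : Fin s) (k : Fin n) :
    atomWord x i k = ((x.w i (x.partOf k)).sort (· ≤ ·)).getD (rk (x.partOf k) k) k := rfl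

lemma atomWord_spec (x : VPart n s) (i : Fin s) {k : Fin n} {B : Finset (Fin n)}
    (hB : B ∈ x.P.parts) (hkB : k ∈ B) :
    atomWord x i k ∈ x.w i B ∧ rk (x.w i B) (atomWord x i k) = rk B k := by
  have hpart : x.partOf k = B := partOf_eq hB hkB
  have hrk : rk B k < (x.w i B).card := by
    rw [x.card_w i B hB]; exact rk_lt_card hkB
  rw [atomWord_eq_getD, hpart]
  exact getD_spec _ hrk k

lemma image_congr' {β : Type*} [DecidableEq β] {f g : Fin n → β} {S : Finset (Fin n)}
    (h : ∀ a ∈ S, f a = g a) : S.image f = S.image g := by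
  ext b
  simp only [Finset.mem_image]
  constructor
  · rintro ⟨a, ha, rfl⟩
    exact ⟨a, ha, (h a ha).symm⟩
  · rintro ⟨a, ha, rfl⟩
    exact ⟨a, ha, h a ha⟩

lemma key {x y : VPart n s} (i : Fin s) (k : Fin n) {B₁ B₂ : Finset (Fin n)}
    (hB₁ : B₁ ∈ x.P.parts) (hB₂ : B₂ ∈ x.P.parts) (hne : B₁ ≠ B₂) (hk1 : k ∈ B₁)
    (hCy : B₁ ∪ B₂ ∈ y.P.parts)
    (hw : y.w i (B₁ ∪ B₂) = x.w i B₁ ∪ x.w i B₂)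
    (hmin' : ∀ k' ∈ B₁ ∪ B₂, k' < k → atomWord x i k' = atomWord y i k')
    (hp : atomWord x i k ≠ atomWord y i k) :
    atomWord y i k ∈ x.w i B₂ := by
  set C := B₁ ∪ B₂ with hCdef
  set w₁ := x.w i B₁ with hw₁def
  set w₂ := x.w i B₂ with hw₂def
  have hkC : k ∈ C := Finset.mem_union_left _ hk1
  have hdisB : Disjoint B₁ B₂ := x.P.disjoint hB₁ hB₂ hne
  have hdisw : Disjoint w₁ w₂ := w_disjoint x i hB₁ hB₂ hne
  have hcardC : (w₁ ∪ w₂).card = C.card := by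
    rw [Finset.card_union_of_disjoint hdisw, x.card_w i B₁ hB₁, x.card_w i B₂ hB₂,
      hCdef, Finset.card_union_of_disjoint hdisB]
  obtain ⟨hjmem, hjrk⟩ := atomWord_spec y i hCy hkC
  rw [hw] at hjmem hjrk
  obtain ⟨hj'mem, hj'rk⟩ := atomWord_spec x i hB₁ hk1
  set j := atomWord y i k with hjdef
  set j' := atomWord x i k with hj'def
  by_contra hjw2
  have hjw1 : j ∈ w₁ := by
    rcases Finset.mem_union.1 hjmem with h | h
    · exact h
    · exact absurd h hjw2
  have hyC : y.partOf k = C := partOf_eq hCy hkC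
  have hφj : ((w₁ ∪ w₂).sort (· ≤ ·)).getD (rk C k) k = j := by
    rw [hjdef, atomWord_eq_getD, hyC, hw]
  have himg : (w₁ ∪ w₂).filter (· < j) =
      (C.filter (· < k)).image (atomWord x i) := by
    rw [← hφj]
    rw [filter_lt_eq_image C (w₁ ∪ w₂) hcardC k hkC]
    apply image_congr'
    intro a ha
    obtain ⟨haC, hak⟩ := Finset.mem_filter.1 ha
    have hlen : rk C a < ((w₁ ∪ w₂).sort (· ≤ ·)).length := by
      rw [Finset.length_sort, hcardC]; exact rk_lt_card haC
    have h1 : ((w₁ ∪ w₂).sort (· ≤ ·)).getD (rk C a) k = atomWord y i a := by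
      rw [atomWord_eq_getD, partOf_eq hCy haC, hw,
        List.getD_eq_getElem _ _ hlen, List.getD_eq_getElem _ _ hlen]
    show ((w₁ ∪ w₂).sort (· ≤ ·)).getD (rk C a) k = atomWord x i a
    rw [h1, ← hmin' a haC hak]
  have hsplit : C.filter (· < k) = B₁.filter (· < k) ∪ B₂.filter (· < k) := by
    rw [hCdef, Finset.filter_union]
  have himg1 : (B₁.filter (· < k)).image (atomWord x i) = w₁.filter (· < j') := by
    have hcard1 : w₁.card = B₁.card := x.card_w i B₁ hB₁
    have hφ : (w₁.sort (· ≤ ·)).getD (rk B₁ k) k = j' := by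
      rw [hj'def, atomWord_eq_getD, partOf_eq hB₁ hk1]
    rw [← hφ, filter_lt_eq_image B₁ w₁ hcard1 k hk1]
    symm
    apply image_congr'
    intro a ha
    obtain ⟨haB, hak⟩ := Finset.mem_filter.1 ha
    have hlen : rk B₁ a < (w₁.sort (· ≤ ·)).length := by
      rw [Finset.length_sort, hcard1]; exact rk_lt_card haB
    show (w₁.sort (· ≤ ·)).getD (rk B₁ a) k = atomWord x i a
    rw [atomWord_eq_getD, partOf_eq hB₁ haB,
      List.getD_eq_getElem _ _ hlen, List.getD_eq_getElem _ _ hlen]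
  have himg2 : ∀ t ∈ (B₂.filter (· < k)).image (atomWord x i), t ∈ w₂ := by
    intro t ht
    obtain ⟨a, haf, rfl⟩ := Finset.mem_image.1 ht
    exact (atomWord_spec x i hB₂ (Finset.mem_filter.1 haf).1).1
  rcases lt_trichotomy j j' with hlt | heq | hlt
  · have hjL : j ∈ (w₁ ∪ w₂).filter (· < j) := by
      rw [himg, hsplit, Finset.image_union]
      apply Finset.mem_union_left
      rw [himg1]
      exact Finset.mem_filter.2 ⟨hjw1, hlt⟩
    simpa using (Finset.mem_filter.1 hjL).2
  · exact hp heq.symm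
  · have hj'L : j' ∈ (w₁ ∪ w₂).filter (· < j) :=
      Finset.mem_filter.2 ⟨Finset.mem_union_left _ hj'mem, hlt⟩
    rw [himg, hsplit, Finset.image_union] at hj'L
    rcases Finset.mem_union.1 hj'L with h | h
    · rw [himg1] at h
      simpa using (Finset.mem_filter.1 h).2
    · exact (Finset.disjoint_left.1 hdisw hj'mem) (himg2 _ h)

end VPart

open VPart in
/-- if `x ⋖ y` is an edge with `A(x) ≠ A(y)` and label `(k, i, j)`
(here `p = (k, i)` and `j = atomWord y p.2 p.1`), then the underlying partition of `y`
is obtained from that of `x` by merging the part containing `k` with the part whose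
`i`-th label contains `j`. -/
theorem statement11 (n s : ℕ) (x y : VPart n s) (hxy : x ⋖ y)
    (hA : atomWord x ≠ atomWord y) (p : Fin n × Fin s)
    (hp : atomWord x p.2 p.1 ≠ atomWord y p.2 p.1)
    (hmin : ∀ q : Fin n × Fin s, (q.1 < p.1 ∨ (q.1 = p.1 ∧ q.2 < p.2)) ->
      atomWord x q.2 q.1 = atomWord y q.2 q.1) :
    ∃ B₁ B₂ : Finset (Fin n), B₁ ∈ x.P.parts ∧ B₂ ∈ x.P.parts ∧ B₁ ≠ B₂ ∧
      p.1 ∈ B₁ ∧ atomWord y p.2 p.1 ∈ x.w p.2 B₂ ∧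
      y.P.parts = insert (B₁ ∪ B₂) ((x.P.parts.erase B₁).erase B₂) := by

  obtain ⟨B₁, B₂, hB₁, hB₂, hne, hparts⟩ := cover_structure hxy
  have hle : x ≤ y := hxy.1.le
  have hCy : B₁ ∪ B₂ ∈ y.P.parts := by rw [hparts]; exact Finset.mem_insert_self _ _
  have hfil : x.P.parts.filter (· ⊆ B₁ ∪ B₂) = {B₁, B₂} := by
    ext B
    simp only [Finset.mem_filter, Finset.mem_insert, Finset.mem_singleton]
    constructor
    · rintro ⟨hB, hsub⟩
      obtain ⟨b, hb⟩ := x.P.nonempty_of_mem_parts hB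
      rcases Finset.mem_union.1 (hsub hb) with h | h
      · exact Or.inl (x.P.eq_of_mem_parts hB hB₁ hb h)
      · exact Or.inr (x.P.eq_of_mem_parts hB hB₂ hb h)
    · rintro (rfl | rfl)
      · exact ⟨hB₁, Finset.subset_union_left⟩
      · exact ⟨hB₂, Finset.subset_union_right⟩
  have hwC : ∀ i' : Fin s, y.w i' (B₁ ∪ B₂) = x.w i' B₁ ∪ x.w i' B₂ := by
    intro i'
    rw [w_forced hle i' hCy, hfil]
    rw [Finset.biUnion_insert, Finset.singleton_biUnion]
  have hkC : p.1 ∈ B₁ ∪ B₂ := by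
    by_contra hk
    apply hp
    have hDy : y.partOf p.1 ∈ y.P.parts := y.P.part_mem.2 (Finset.mem_univ _)
    have hkD : p.1 ∈ y.partOf p.1 := y.P.mem_part (Finset.mem_univ _)
    have hDC : y.partOf p.1 ≠ B₁ ∪ B₂ := fun h => hk (h ▸ hkD)
    have hDx : y.partOf p.1 ∈ x.P.parts := by
      have hmem := hparts ▸ hDy
      rcases Finset.mem_insert.1 hmem with h | h
      · exact absurd h hDC
      · exact Finset.mem_of_mem_erase (Finset.mem_of_mem_erase h)
    have hwD : y.w p.2 (y.partOf p.1) = x.w p.2 (y.partOf p.1) := by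
      rw [w_forced hle p.2 hDy, filter_subset_self_parts hDx, Finset.singleton_biUnion]
    have hx : x.partOf p.1 = y.partOf p.1 := partOf_eq hDx hkD
    rw [atomWord_eq_getD, atomWord_eq_getD, hx, hwD]
  rcases Finset.mem_union.1 hkC with hk1 | hk2
  · refine ⟨B₁, B₂, hB₁, hB₂, hne, hk1, ?_, hparts⟩
    apply key p.2 p.1 hB₁ hB₂ hne hk1 hCy (hwC p.2) ?_ hp
    intro k' hk' hklt
    exact hmin (k', p.2) (Or.inl hklt)
  · refine ⟨B₂, B₁, hB₂, hB₁, hne.symm, hk2, ?_, ?_⟩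
    · apply key p.2 p.1 hB₂ hB₁ hne.symm hk2 ?_ ?_ ?_ hp
      · rwa [Finset.union_comm]
      · rw [Finset.union_comm B₂ B₁, Finset.union_comm (x.w p.2 B₂) (x.w p.2 B₁)]
        exact hwC p.2
      · intro k' hk' hklt
        exact hmin (k', p.2) (Or.inl hklt)
    · rw [hparts, Finset.union_comm B₂ B₁]
      congr 1
      exact Finset.erase_right_comm
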